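/- arXiv:1902.02763 — 4 statements merged into one kernel-verified Lean document; each statement's English description precedes it below -/
import Mathlib

section
/- There exist constants c > 0 and m₀ ≥ 2 such that the following holds for every integer m ≥ m₀. Let G = (X, Y, E) be a finite bipartite graph with |X| = m in which every vertex of X has at least one neighbor and whose maximum matching has size m (equivalently, some matching of G saturates X). If each u ∈ X independently selects one of its neighbors in Y uniformly at random, then with probability at least c, the number of distinct vertices of Y that are selected by at least one vertex of X is at least √m / log m. -/
set_option linter.unusedSectionVars false

open MeasureTheory Finset

noncomputable def selMeasure {X Y : Type} [Fintype X] (N : X → Finset Y)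
    (hN : ∀ u, (N u).Nonempty) :
    @Measure (X → Y) (@MeasurableSpace.pi X (fun _ => Y) (fun _ => ⊤)) :=
  @Measure.pi X (fun _ => Y) _ (fun _ => ⊤) fun u =>
    @PMF.toMeasure Y ⊤ (PMF.uniformOfFinset (N u) (hN u))

section Infra

variable {X Y : Type} [Fintype X] [Fintype Y] [DecidableEq Y]

/-- weight of vertex `a` for `u`. -/
noncomputable def selw (N : X → Finset Y) (u : X) (a : Y) : ℝ :=
  if a ∈ N u then ((N u).card : ℝ)⁻¹ else 0

noncomputable def selq (N : X → Finset Y) (f : X → Y) : ℝ := ∏ u, selw N u (f u)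

lemma selw_nonneg (N : X → Finset Y) (u : X) (a : Y) : 0 ≤ selw N u a := by
  unfold selw; split <;> positivity

lemma selw_le (N : X → Finset Y) (u : X) (a : Y) : selw N u a ≤ ((N u).card : ℝ)⁻¹ := by
  unfold selw; split
  · exact le_rfl
  · positivity

lemma selw_sum (N : X → Finset Y) (hN : ∀ u, (N u).Nonempty) (u : X) :
    ∑ a : Y, selw N u a = 1 := by
  unfold selw
  rw [Finset.sum_ite_mem, Finset.univ_inter, Finset.sum_const, nsmul_eq_mul,
    mul_inv_cancel₀]
  exact Nat.cast_ne_zero.mpr (Finset.card_ne_zero.mpr (hN u))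

lemma selq_nonneg (N : X → Finset Y) (f : X → Y) : 0 ≤ selq N f :=
  Finset.prod_nonneg fun u _ => selw_nonneg N u (f u)

end Infra

section Meas

variable {X Y : Type} [Fintype X] [Fintype Y] [DecidableEq Y]

lemma selMeasure_singleton (N : X → Finset Y) (hN : ∀ u, (N u).Nonempty) (f : X → Y) :
    selMeasure N hN {f} = ENNReal.ofReal (selq N f) := by
  letI : MeasurableSpace Y := ⊤
  have hrw : selMeasure N hN
      = Measure.pi (fun u => (PMF.uniformOfFinset (N u) (hN u)).toMeasure) := rfl
  rw [hrw, ← Set.univ_pi_singleton f, Measure.pi_pi]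
  have h1 : ∀ u, (PMF.uniformOfFinset (N u) (hN u)).toMeasure {f u}
      = ENNReal.ofReal (selw N u (f u)) := by
    intro u
    rw [PMF.toMeasure_apply_singleton _ _ (measurableSet_singleton _),
      PMF.uniformOfFinset_apply]
    unfold selw
    split
    · rw [ENNReal.ofReal_inv_of_pos, ENNReal.ofReal_natCast]
      exact_mod_cast Finset.card_pos.mpr (hN u)
    · simp
  simp_rw [h1]
  rw [selq, ← ENNReal.ofReal_prod_of_nonneg]
  intro u _
  exact selw_nonneg N u (f u)

lemma selMeasure_finset (N : X → Finset Y) (hN : ∀ u, (N u).Nonempty)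
    (S : Finset (X → Y)) :
    selMeasure N hN ↑S = ENNReal.ofReal (∑ f ∈ S, selq N f) := by
  letI : MeasurableSpace Y := ⊤
  have hS : (↑S : Set (X → Y)) = ⋃ f ∈ S, ({f} : Set (X → Y)) := by
    ext g; simp
  rw [hS, measure_biUnion_finset]
  · rw [ENNReal.ofReal_sum_of_nonneg (fun f _ => selq_nonneg N f)]
    exact Finset.sum_congr rfl fun f _ => selMeasure_singleton N hN f
  · intro f _ g _ hfg
    simp [Function.onFun, Set.disjoint_singleton_left, hfg]
  · intro f _
    rw [← Set.univ_pi_singleton f]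
    exact MeasurableSet.univ_pi fun u => trivial

end Meas

section Marg

variable {X Y : Type} [Fintype X] [Fintype Y] [DecidableEq Y] [DecidableEq X]

lemma selq_master (φ : X → Y → ℝ) :
    ∑ f : X → Y, ∏ u, φ u (f u) = ∏ u, ∑ a, φ u a := by
  rw [Finset.prod_univ_sum]
  rfl

lemma selq_marg (N : X → Finset Y) (hN : ∀ u, (N u).Nonempty) (S : Finset X)
    (φ : X → Y → ℝ) :
    ∑ f : X → Y, selq N f * ∏ u ∈ S, φ u (f u)
      = ∏ u ∈ S, ∑ a, selw N u a * φ u a := by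
  have h1 : ∀ f : X → Y, selq N f * ∏ u ∈ S, φ u (f u)
      = ∏ u, (selw N u (f u) * (if u ∈ S then φ u (f u) else 1)) := by
    intro f
    rw [Finset.prod_mul_distrib, Fintype.prod_extend_by_one]
    rfl
  simp_rw [h1]
  rw [selq_master (fun u a => selw N u a * (if u ∈ S then φ u a else 1))]
  have h2 : ∀ u, (∑ a, selw N u a * (if u ∈ S then φ u a else 1))
      = if u ∈ S then (∑ a, selw N u a * φ u a) else 1 := by
    intro u
    split <;> simp [selw_sum N hN u]
  simp_rw [h2]
  exact Fintype.prod_extend_by_one S _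

lemma selq_sum_one (N : X → Finset Y) (hN : ∀ u, (N u).Nonempty) :
    ∑ f : X → Y, selq N f = 1 := by
  have := selq_marg N hN ∅ (fun _ _ => 1)
  simpa using this

end Marg

section Exp

variable {X Y : Type} [Fintype X] [Fintype Y] [DecidableEq Y] [DecidableEq X]
variable (N : X → Finset Y)

lemma sel_exp_single (hN : ∀ u, (N u).Nonempty) (u : X) (g : Y → ℝ) :
    ∑ f : X → Y, selq N f * g (f u) = ∑ a, selw N u a * g a := by
  have h := selq_marg N hN {u} (fun _ a => g a)
  simpa using h

lemma sel_exp_pair (hN : ∀ u, (N u).Nonempty) {u v : X} (huv : u ≠ v) (g h : Y → ℝ) :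
    ∑ f : X → Y, selq N f * (g (f u) * h (f v))
      = (∑ a, selw N u a * g a) * (∑ a, selw N v a * h a) := by
  have hm := selq_marg N hN {u, v} (fun t a => if t = u then g a else h a)
  rw [Finset.prod_pair huv] at hm
  simp only [if_pos rfl, if_neg huv.symm] at hm
  have h2 : ∀ f : X → Y,
      (∏ t ∈ ({u, v} : Finset X), if t = u then g (f t) else h (f t))
        = g (f u) * h (f v) := by
    intro f
    rw [Finset.prod_pair huv]
    simp [if_neg huv.symm]
  simp_rw [h2] at hm
  exact hm

lemma sel_exp_ind (hN : ∀ u, (N u).Nonempty) (u : X) (b : Y) :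
    ∑ f : X → Y, selq N f * (if f u = b then 1 else 0) = selw N u b := by
  rw [sel_exp_single N hN u (fun a => if a = b then 1 else 0)]
  simp [mul_ite]

lemma sel_exp_ind_pair (hN : ∀ u, (N u).Nonempty) {u v : X} (huv : u ≠ v) (b c : Y) :
    ∑ f : X → Y, selq N f * ((if f u = b then 1 else 0) * (if f v = c then 1 else 0))
      = selw N u b * selw N v c := by
  rw [sel_exp_pair N hN huv (fun a => if a = b then 1 else 0) (fun a => if a = c then 1 else 0)]
  simp [mul_ite]

/-- probability that two distinct coordinates collide, as a sum over common values -/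
lemma sel_exp_collide (hN : ∀ u, (N u).Nonempty) {u v : X} (huv : u ≠ v) :
    ∑ f : X → Y, selq N f * (if f u = f v then 1 else 0)
      = ∑ c, selw N u c * selw N v c := by
  have hpt : ∀ f : X → Y, (if f u = f v then (1:ℝ) else 0)
      = ∑ c, (if f u = c then (1:ℝ) else 0) * (if f v = c then 1 else 0) := by
    intro f
    by_cases h : f u = f v
    · rw [if_pos h]
      rw [Finset.sum_eq_single (f u)]
      · simp [h]
      · intro c _ hc
        simp [if_neg (by exact fun hh => hc (hh ▸ rfl) : ¬ f u = c)]
      · simp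
    · rw [if_neg h]
      symm
      apply Finset.sum_eq_zero
      intro c _
      by_cases h1 : f u = c
      · have : ¬ f v = c := fun h2 => h (h1.trans h2.symm)
        simp [this]
      · simp [h1]
  simp_rw [hpt, Finset.mul_sum]
  rw [Finset.sum_comm]
  exact Finset.sum_congr rfl fun c _ => sel_exp_ind_pair N hN huv c c

end Exp

section Case1

variable {X Y : Type} [Fintype X] [Fintype Y] [DecidableEq Y] [DecidableEq X]

lemma sel_case1 (N : X → Finset Y) (hN : ∀ u, (N u).Nonempty) (M : X → Y)
    (hM : Function.Injective M) (hMN : ∀ u, M u ∈ N u) (k : ℕ) (hk : 1 ≤ k)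
    (hE : 2 * (k : ℝ) ≤ ∑ u, ((N u).card : ℝ)⁻¹) :
    (8 : ℝ)⁻¹ ≤ ∑ f ∈ Finset.univ.filter
        (fun f : X → Y => k ≤ ((Finset.univ : Finset X).image f).card), selq N f := by
  classical
  set p : X → ℝ := fun u => ((N u).card : ℝ)⁻¹ with hp
  set E1 : ℝ := ∑ u, p u with hE1
  set Zr : (X → Y) → ℝ := fun f => ∑ u, (if f u = M u then (1:ℝ) else 0) with hZr
  have hppos : ∀ u, 0 < p u := by
    intro u
    have : 0 < (N u).card := Finset.card_pos.mpr (hN u)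
    positivity
  have hw : ∀ u, selw N u (M u) = p u := by
    intro u; unfold selw; rw [if_pos (hMN u)]
  -- first moment
  have hEZ : ∑ f : X → Y, selq N f * Zr f = E1 := by
    simp_rw [hZr, Finset.mul_sum]
    rw [Finset.sum_comm]
    refine Finset.sum_congr rfl fun u _ => ?_
    rw [sel_exp_ind N hN u (M u), hw]
  -- second moment
  have hterm : ∀ u v : X, ∑ f : X → Y,
      selq N f * ((if f u = M u then (1:ℝ) else 0) * (if f v = M v then 1 else 0))
      = if u = v then p u else p u * p v := by
    intro u v
    by_cases h : u = v
    · subst h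
      rw [if_pos rfl]
      have : ∀ f : X → Y, ((if f u = M u then (1:ℝ) else 0) * (if f u = M u then 1 else 0))
          = (if f u = M u then (1:ℝ) else 0) := by
        intro f; split <;> simp
      simp_rw [this]
      rw [sel_exp_ind N hN u (M u), hw]
    · rw [if_neg h, sel_exp_ind_pair N hN h, hw, hw]
  have hEZ2 : ∑ f : X → Y, selq N f * (Zr f)^2 ≤ E1^2 + E1 := by
    have expand : ∀ f : X → Y, selq N f * (Zr f)^2 = ∑ u, ∑ v,
        selq N f * ((if f u = M u then (1:ℝ) else 0) * (if f v = M v then 1 else 0)) := by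
      intro f
      rw [hZr, sq, Finset.sum_mul_sum]
      simp_rw [Finset.mul_sum]
    calc ∑ f : X → Y, selq N f * (Zr f)^2
        = ∑ f : X → Y, ∑ u, ∑ v, selq N f *
            ((if f u = M u then (1:ℝ) else 0) * (if f v = M v then 1 else 0)) := by
          exact Finset.sum_congr rfl fun f _ => expand f
      _ = ∑ u, ∑ v, ∑ f : X → Y, selq N f *
            ((if f u = M u then (1:ℝ) else 0) * (if f v = M v then 1 else 0)) := by
          rw [Finset.sum_comm]
          exact Finset.sum_congr rfl fun u _ => Finset.sum_comm
      _ = ∑ u, ∑ v, (if u = v then p u else p u * p v) := by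
          exact Finset.sum_congr rfl fun u _ => Finset.sum_congr rfl fun v _ => hterm u v
      _ ≤ ∑ u, ∑ v, (p u * p v + if u = v then p u else 0) := by
          refine Finset.sum_le_sum fun u _ => Finset.sum_le_sum fun v _ => ?_
          by_cases h : u = v
          · subst h
            have h1 : (if u = u then p u else p u * p u) = p u := if_pos rfl
            have h2 : (if u = u then p u else (0:ℝ)) = p u := if_pos rfl
            rw [h1, h2]
            nlinarith [hppos u]
          · simp [if_neg h]
      _ = E1^2 + E1 := by
          simp_rw [Finset.sum_add_distrib]
          congr 1
          · rw [sq, hE1, Finset.sum_mul_sum]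
          · simp only [Finset.sum_ite_eq, Finset.mem_univ, if_true, hE1]
  -- the event on Z
  set A : Finset (X → Y) := Finset.univ.filter (fun f => (k:ℝ) ≤ Zr f) with hA
  have hZnonneg : ∀ f : X → Y, 0 ≤ Zr f := by
    intro f
    refine Finset.sum_nonneg fun u _ => ?_
    split <;> norm_num
  have hk1 : (1:ℝ) ≤ (k:ℝ) := Nat.one_le_cast.mpr hk
  have hE2 : (2:ℝ) ≤ E1 := by linarith
  have hE1pos : (0:ℝ) < E1 := by linarith
  have hk2 : (k:ℝ) ≤ E1 / 2 := by linarith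
  -- lower bound on the partial first moment
  have hA1 : E1 / 2 ≤ ∑ f ∈ A, selq N f * Zr f := by
    have hsplit := Finset.sum_filter_add_sum_filter_not Finset.univ
      (fun f : X → Y => (k:ℝ) ≤ Zr f) (fun f => selq N f * Zr f)
    have hcompl : ∑ f ∈ Finset.univ.filter (fun f : X → Y => ¬ (k:ℝ) ≤ Zr f),
        selq N f * Zr f ≤ (k:ℝ) := by
      calc ∑ f ∈ Finset.univ.filter (fun f : X → Y => ¬ (k:ℝ) ≤ Zr f), selq N f * Zr f
          ≤ ∑ f ∈ Finset.univ.filter (fun f : X → Y => ¬ (k:ℝ) ≤ Zr f), selq N f * k := by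
            refine Finset.sum_le_sum fun f hf => ?_
            have hlt : Zr f ≤ k := le_of_lt (not_le.mp (Finset.mem_filter.mp hf).2)
            exact mul_le_mul_of_nonneg_left hlt (selq_nonneg N f)
        _ = (∑ f ∈ Finset.univ.filter (fun f : X → Y => ¬ (k:ℝ) ≤ Zr f), selq N f) * k := by
            rw [Finset.sum_mul]
        _ ≤ 1 * k := by
            refine mul_le_mul_of_nonneg_right ?_ (by positivity)
            rw [← selq_sum_one N hN]
            exact Finset.sum_le_sum_of_subset_of_nonneg (Finset.filter_subset _ _)
              (fun f _ _ => selq_nonneg N f)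
        _ = k := one_mul _
    have : ∑ f ∈ A, selq N f * Zr f = E1 - ∑ f ∈ Finset.univ.filter
        (fun f : X → Y => ¬ (k:ℝ) ≤ Zr f), selq N f * Zr f := by
      rw [← hEZ, ← hsplit, hA]; ring
    rw [this]
    linarith
  -- Cauchy--Schwarz (Paley--Zygmund)
  have hCS : (∑ f ∈ A, selq N f * Zr f)^2
      ≤ (∑ f ∈ A, selq N f) * (∑ f ∈ A, selq N f * (Zr f)^2) := by
    refine Finset.sum_sq_le_sum_mul_sum_of_sq_eq_mul A
      (fun f _ => selq_nonneg N f)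
      (fun f _ => mul_nonneg (selq_nonneg N f) (sq_nonneg _))
      (fun f _ => by ring)
  have hA2 : ∑ f ∈ A, selq N f * (Zr f)^2 ≤ E1^2 + E1 := by
    refine le_trans (Finset.sum_le_sum_of_subset_of_nonneg (Finset.subset_univ A)
      (fun f _ _ => mul_nonneg (selq_nonneg N f) (sq_nonneg _))) hEZ2
  have hPA : (8:ℝ)⁻¹ ≤ ∑ f ∈ A, selq N f := by
    have h1 : (E1/2)^2 ≤ (∑ f ∈ A, selq N f * Zr f)^2 := by
      have := hA1
      nlinarith [hA1, hE1pos]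
    have h2 : E1^2 + E1 ≤ 2 * E1^2 := by nlinarith [hE2]
    have hPAnn : (0:ℝ) ≤ ∑ f ∈ A, selq N f :=
      Finset.sum_nonneg fun f _ => selq_nonneg N f
    have key : (8:ℝ)⁻¹ * (2 * E1^2) ≤ (∑ f ∈ A, selq N f) * (2 * E1^2) := by
      nlinarith [h1, hCS, hA2, hPAnn, h2, hE1pos]
    have hpos : (0:ℝ) < 2 * E1^2 := by positivity
    exact le_of_mul_le_mul_right key hpos
  -- the event on Z implies the event on the image
  refine le_trans hPA (Finset.sum_le_sum_of_subset_of_nonneg ?_ (fun f _ _ => selq_nonneg N f))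
  intro f hf
  rw [hA, Finset.mem_filter] at hf
  rw [Finset.mem_filter]
  refine ⟨Finset.mem_univ f, ?_⟩
  have hZcard : Zr f = ((Finset.univ.filter (fun u => f u = M u)).card : ℝ) := by
    rw [hZr]
    exact Finset.sum_boole _ _
  have hcard : (Finset.univ.filter (fun u => f u = M u)).card
      ≤ ((Finset.univ : Finset X).image f).card := by
    refine Finset.card_le_card_of_injOn f (fun u _ => Finset.mem_image_of_mem f (Finset.mem_univ u)) ?_
    intro u hu v hv huv
    have hu' : f u = M u := (Finset.mem_filter.mp hu).2
    have hv' : f v = M v := (Finset.mem_filter.mp hv).2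
    exact hM (by rw [← hu', ← hv', huv])
  have : (k:ℝ) ≤ ((Finset.univ : Finset X).image f).card := by
    refine le_trans hf.2 ?_
    rw [hZcard]
    exact_mod_cast hcard
  exact_mod_cast this

end Case1

section Case2

variable {X Y : Type} [Fintype X] [Fintype Y] [DecidableEq Y] [DecidableEq X]

/-- the number of distinct values on `T` is at least `|T|` minus the number of ordered
collisions. -/
lemma collision_bound (T : Finset X) (f : X → Y) :
    (T.card : ℝ) - (∑ u ∈ T, ∑ v ∈ T.erase u, (if f u = f v then (1:ℝ) else 0))
      ≤ ((T.image f).card : ℝ) := by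
  classical
  set s : Y → ℕ := fun b => (T.filter (fun v => f v = b)).card with hs
  have hinner : ∀ u ∈ T, ∑ v ∈ T.erase u, (if f u = f v then (1:ℝ) else 0)
      = (s (f u) : ℝ) - 1 := by
    intro u hu
    rw [Finset.sum_boole]
    have h1 : (T.erase u).filter (fun v => f u = f v)
        = (T.filter (fun v => f v = f u)).erase u := by
      ext v
      simp only [Finset.mem_erase, Finset.mem_filter]
      constructor
      · rintro ⟨⟨hvu, hvT⟩, he⟩; exact ⟨hvu, hvT, he.symm⟩
      · rintro ⟨hvu, hvT, he⟩; exact ⟨⟨hvu, hvT⟩, he.symm⟩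
    have h2 : u ∈ T.filter (fun v => f v = f u) := Finset.mem_filter.mpr ⟨hu, rfl⟩
    have h3 : 1 ≤ s (f u) := Finset.card_pos.mpr ⟨u, h2⟩
    rw [h1, Finset.card_erase_of_mem h2]
    rw [Nat.cast_sub h3, Nat.cast_one]
  rw [Finset.sum_congr rfl hinner, Finset.sum_sub_distrib]
  have hcomp : ∑ u ∈ T, (s (f u) : ℝ) = ∑ b ∈ T.image f, (s b : ℝ) * (s b : ℝ) := by
    rw [Finset.sum_comp (fun b => (s b : ℝ)) f]
    refine Finset.sum_congr rfl fun b _ => ?_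
    rw [nsmul_eq_mul]
  have hcard : (T.card : ℝ) = ∑ b ∈ T.image f, (s b : ℝ) := by
    rw [Finset.card_eq_sum_card_image f T]
    push_cast
    rfl
  have hconst : ∑ _u ∈ T, (1:ℝ) = (T.card : ℝ) := by simp
  have himg : ((T.image f).card : ℝ) = ∑ _b ∈ T.image f, (1:ℝ) := by simp
  have main : ∑ b ∈ T.image f, (2 * (s b:ℝ) - (s b:ℝ) * (s b:ℝ))
      ≤ ∑ _b ∈ T.image f, (1:ℝ) :=
    Finset.sum_le_sum fun b _ => by nlinarith [sq_nonneg ((s b:ℝ) - 1)]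
  rw [Finset.sum_sub_distrib, ← Finset.mul_sum] at main
  rw [hcomp, hconst, himg]
  rw [hcard]
  linarith

lemma sel_case2 (N : X → Finset Y) (hN : ∀ u, (N u).Nonempty) (k d : ℕ) (hk : 1 ≤ k)
    (hd : 1 ≤ d) (T : Finset X) (hT : T.card = 2 * k) (hTd : ∀ u ∈ T, d ≤ (N u).card)
    (hdk : 8 * k ≤ d) :
    (2:ℝ)⁻¹ ≤ ∑ f ∈ Finset.univ.filter
        (fun f : X → Y => k ≤ ((Finset.univ : Finset X).image f).card), selq N f := by
  classical
  set Cr : (X → Y) → ℝ :=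
    fun f => ∑ u ∈ T, ∑ v ∈ T.erase u, (if f u = f v then (1:ℝ) else 0) with hCr
  have hdpos : (0:ℝ) < d := by exact_mod_cast hd
  have hkpos : (0:ℝ) < k := by exact_mod_cast hk
  have hCrnn : ∀ f : X → Y, 0 ≤ Cr f := by
    intro f
    refine Finset.sum_nonneg fun u _ => Finset.sum_nonneg fun v _ => ?_
    split <;> norm_num
  -- expected number of ordered collisions
  have hECr : ∑ f : X → Y, selq N f * Cr f ≤ 4 * (k:ℝ)^2 / d := by
    have hswap : ∑ f : X → Y, selq N f * Cr f
        = ∑ u ∈ T, ∑ v ∈ T.erase u, ∑ f : X → Y,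
            selq N f * (if f u = f v then (1:ℝ) else 0) := by
      simp_rw [hCr, Finset.mul_sum]
      rw [Finset.sum_comm]
      refine Finset.sum_congr rfl fun u _ => Finset.sum_comm
    rw [hswap]
    have hterm : ∀ u ∈ T, ∀ v ∈ T.erase u,
        ∑ f : X → Y, selq N f * (if f u = f v then (1:ℝ) else 0) ≤ (d:ℝ)⁻¹ := by
      intro u hu v hv
      have huv : u ≠ v := (Finset.ne_of_mem_erase hv).symm
      rw [sel_exp_collide N hN huv]
      have hdv : (d:ℝ) ≤ ((N v).card : ℝ) := by
        exact_mod_cast hTd v (Finset.mem_of_mem_erase hv)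
      calc ∑ c, selw N u c * selw N v c
          ≤ ∑ c, selw N u c * (d:ℝ)⁻¹ := by
            refine Finset.sum_le_sum fun c _ => ?_
            refine mul_le_mul_of_nonneg_left ?_ (selw_nonneg N u c)
            refine le_trans (selw_le N v c) ?_
            gcongr
        _ = (d:ℝ)⁻¹ := by rw [← Finset.sum_mul, selw_sum N hN u, one_mul]
    calc ∑ u ∈ T, ∑ v ∈ T.erase u, ∑ f : X → Y,
          selq N f * (if f u = f v then (1:ℝ) else 0)
        ≤ ∑ u ∈ T, ∑ v ∈ T.erase u, (d:ℝ)⁻¹ :=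
          Finset.sum_le_sum fun u hu => Finset.sum_le_sum fun v hv => hterm u hu v hv
      _ ≤ ∑ _u ∈ T, (2*(k:ℝ)) * (d:ℝ)⁻¹ := by
          refine Finset.sum_le_sum fun u hu => ?_
          rw [Finset.sum_const, nsmul_eq_mul]
          refine mul_le_mul_of_nonneg_right ?_ (by positivity)
          have h1 : (T.erase u).card ≤ T.card := Finset.card_le_card (Finset.erase_subset u T)
          calc ((T.erase u).card : ℝ) ≤ (T.card : ℝ) := by exact_mod_cast h1
            _ = 2*(k:ℝ) := by rw [hT]; push_cast; ring
      _ = 4 * (k:ℝ)^2 / d := by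
          rw [Finset.sum_const, hT, nsmul_eq_mul]
          push_cast
          field_simp
          ring
  -- Markov's inequality for the collision count
  set B : Finset (X → Y) := Finset.univ.filter (fun f => (k:ℝ) ≤ Cr f) with hB
  have hMarkov : ∑ f ∈ B, selq N f ≤ (2:ℝ)⁻¹ := by
    have h1 : (k:ℝ) * ∑ f ∈ B, selq N f ≤ ∑ f : X → Y, selq N f * Cr f := by
      calc (k:ℝ) * ∑ f ∈ B, selq N f = ∑ f ∈ B, selq N f * k := by
            rw [Finset.mul_sum]; exact Finset.sum_congr rfl fun f _ => by ring
        _ ≤ ∑ f ∈ B, selq N f * Cr f := by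
            refine Finset.sum_le_sum fun f hf => ?_
            exact mul_le_mul_of_nonneg_left ((Finset.mem_filter.mp hf).2) (selq_nonneg N f)
        _ ≤ ∑ f : X → Y, selq N f * Cr f := by
            refine Finset.sum_le_sum_of_subset_of_nonneg (Finset.subset_univ B) ?_
            exact fun f _ _ => mul_nonneg (selq_nonneg N f) (hCrnn f)
    have h2 : (k:ℝ) * ∑ f ∈ B, selq N f ≤ 4 * (k:ℝ)^2 / d := le_trans h1 hECr
    have h3 : 4 * (k:ℝ)^2 / d ≤ (k:ℝ) * (2:ℝ)⁻¹ := by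
      rw [div_le_iff₀ hdpos]
      have hdk' : 8 * (k:ℝ) ≤ d := by exact_mod_cast hdk
      nlinarith [hkpos]
    have h4 : (k:ℝ) * ∑ f ∈ B, selq N f ≤ (k:ℝ) * (2:ℝ)⁻¹ := le_trans h2 h3
    exact le_of_mul_le_mul_left h4 hkpos
  -- complement event
  have hsplit := Finset.sum_filter_add_sum_filter_not Finset.univ
    (fun f : X → Y => (k:ℝ) ≤ Cr f) (selq N)
  have hcompl : (2:ℝ)⁻¹ ≤ ∑ f ∈ Finset.univ.filter (fun f : X → Y => ¬ (k:ℝ) ≤ Cr f),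
      selq N f := by
    have hone := selq_sum_one N hN
    have : ∑ f ∈ Finset.univ.filter (fun f : X → Y => (k:ℝ) ≤ Cr f), selq N f
        + ∑ f ∈ Finset.univ.filter (fun f : X → Y => ¬ (k:ℝ) ≤ Cr f), selq N f = 1 := by
      rw [hsplit, hone]
    have := hMarkov
    rw [hB] at this
    linarith
  refine le_trans hcompl (Finset.sum_le_sum_of_subset_of_nonneg ?_
    (fun f _ _ => selq_nonneg N f))
  intro f hf
  rw [Finset.mem_filter] at hf
  rw [Finset.mem_filter]
  refine ⟨Finset.mem_univ f, ?_⟩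
  have hCrf : Cr f < k := not_le.mp hf.2
  have hcb := collision_bound T f
  have himg : ((T.image f).card : ℝ) ≤ (((Finset.univ : Finset X).image f).card : ℝ) := by
    exact_mod_cast Finset.card_le_card (Finset.image_subset_image (Finset.subset_univ T))
  have : (k:ℝ) ≤ (((Finset.univ : Finset X).image f).card : ℝ) := by
    have hTc : (T.card : ℝ) = 2 * k := by rw [hT]; push_cast; ring
    rw [hTc] at hcb
    rw [hCr] at hCrf
    linarith
  exact_mod_cast this

end Case2

section Main

variable {X Y : Type} [Fintype X] [Fintype Y] [DecidableEq Y] [DecidableEq X]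

lemma exists_highdeg (N : X → Finset Y) (hN : ∀ u, (N u).Nonempty) (k d : ℕ)
    (hd : 1 ≤ d) (hE : ∑ u, ((N u).card : ℝ)⁻¹ < 2 * k)
    (hcard : 2*(k:ℝ)*d + 2*k ≤ Fintype.card X) :
    ∃ T : Finset X, T.card = 2*k ∧ ∀ u ∈ T, d ≤ (N u).card := by
  classical
  set L : Finset X := Finset.univ.filter (fun u => (N u).card < d) with hL
  have hdpos : (0:ℝ) < d := by exact_mod_cast hd
  have hLsum : (L.card : ℝ) * (d:ℝ)⁻¹ ≤ ∑ u ∈ L, ((N u).card : ℝ)⁻¹ := by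
    rw [Finset.card_eq_sum_ones L]
    push_cast
    rw [Finset.sum_mul]
    refine Finset.sum_le_sum fun u hu => ?_
    rw [one_mul]
    have h1 : ((N u).card : ℝ) ≤ d := by
      exact_mod_cast le_of_lt (Finset.mem_filter.mp hu).2
    have h2 : (0:ℝ) < (N u).card := by exact_mod_cast Finset.card_pos.mpr (hN u)
    gcongr
  have hLsum2 : ∑ u ∈ L, ((N u).card : ℝ)⁻¹ ≤ ∑ u, ((N u).card : ℝ)⁻¹ := by
    refine Finset.sum_le_sum_of_subset_of_nonneg (Finset.subset_univ L) fun u _ _ => ?_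
    positivity
  have hLcard : (L.card : ℝ) < 2*k*d := by
    have h1 : (L.card : ℝ) * (d:ℝ)⁻¹ < 2*k := lt_of_le_of_lt (le_trans hLsum hLsum2) hE
    calc (L.card : ℝ) = (L.card : ℝ) * (d:ℝ)⁻¹ * d := by field_simp
      _ < 2*k*d := by exact mul_lt_mul_of_pos_right h1 hdpos
  set H : Finset X := Finset.univ.filter (fun u => d ≤ (N u).card) with hH
  have hHL : H = Finset.univ \ L := by
    rw [hH, hL]
    ext u
    simp [not_lt]
  have hHcard : 2*k ≤ H.card := by
    have h1 : H.card = Fintype.card X - L.card := by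
      rw [hHL, Finset.card_sdiff_of_subset (Finset.subset_univ L), Finset.card_univ]
    have h2 : L.card ≤ Fintype.card X := by
      rw [← Finset.card_univ]; exact Finset.card_le_card (Finset.subset_univ L)
    have h3 : ((2:ℝ)*k) ≤ (H.card : ℝ) := by
      rw [h1, Nat.cast_sub h2]
      linarith
    exact_mod_cast h3
  obtain ⟨T, hT1, hT2⟩ := Finset.exists_subset_card_eq hHcard
  exact ⟨T, hT2, fun u hu => (Finset.mem_filter.mp (hT1 hu)).2⟩

end Main

/-- There exist constants `c > 0` and `m₀ ≥ 2` such that for every bipartite graph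
`G = (X, Y, E)` with `|X| = m ≥ m₀`, in which every vertex of `X` has a neighbor and some
matching saturates `X` (equivalently, the maximum matching has size `m`): if each `u ∈ X`
independently selects a uniformly random neighbor, then with probability at least `c`
the number of distinct selected vertices of `Y` is at least `√m / log m`. -/
theorem stmt0 :
    ∃ c : ℝ, 0 < c ∧ ∃ m₀ : ℕ, 2 ≤ m₀ ∧
      ∀ m : ℕ, m₀ ≤ m →
      ∀ (X Y : Type) [Fintype X] [Fintype Y] [DecidableEq Y]
        (N : X → Finset Y) (hN : ∀ u, (N u).Nonempty),
        Fintype.card X = m →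
        (∃ M : X → Y, Function.Injective M ∧ ∀ u, M u ∈ N u) →
        ENNReal.ofReal c ≤
          selMeasure N hN
            {f | Real.sqrt m / Real.log m ≤ (((univ : Finset X).image f).card : ℝ)} := by
  classical
  refine ⟨(8:ℝ)⁻¹, by norm_num, 1000000, by norm_num, ?_⟩
  intro m hm X Y _ _ _ N hN hcardX hM
  classical
  obtain ⟨M, hMinj, hMN⟩ := hM
  have hm' : (1000000:ℝ) ≤ (m:ℝ) := by exact_mod_cast hm
  set s : ℝ := Real.sqrt m with hsdef
  set Lg : ℝ := Real.log m with hLdef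
  have hmpos : (0:ℝ) < m := by linarith
  have hs2 : s^2 = m := Real.sq_sqrt (le_of_lt hmpos)
  have hs : (1000:ℝ) ≤ s := by
    rw [hsdef, show (1000:ℝ) = Real.sqrt (1000^2) from (Real.sqrt_sq (by norm_num)).symm]
    exact Real.sqrt_le_sqrt (by norm_num; exact_mod_cast hm)
  have hL : (12:ℝ) ≤ Lg := by
    rw [hLdef, Real.le_log_iff_exp_le hmpos]
    have h1 : Real.exp 1 ≤ 3 := by
      have := Real.exp_one_lt_d9
      linarith
    calc Real.exp 12 = (Real.exp 1)^(12:ℕ) := by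
          rw [Real.exp_one_pow]
          norm_num
      _ ≤ 3^(12:ℕ) := pow_le_pow_left₀ (Real.exp_pos 1).le h1 12
      _ ≤ m := by norm_num; linarith
  set k : ℕ := ⌈s / Lg⌉₊ with hkdef
  have hLpos : (0:ℝ) < Lg := by linarith
  have hr_pos : 0 < s / Lg := by positivity
  have hk1 : 1 ≤ k := Nat.one_le_ceil_iff.mpr hr_pos
  have hkr : s / Lg ≤ (k:ℝ) := Nat.le_ceil _
  have hkub : (k:ℝ) ≤ s/6 := by
    have h1 : (k:ℝ) < s/Lg + 1 := Nat.ceil_lt_add_one (le_of_lt hr_pos)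
    have h2 : s / Lg ≤ s / 12 := by
      apply div_le_div_of_nonneg_left (by linarith) (by norm_num) hL
    have h3 : (1:ℝ) ≤ s/12 := by linarith
    linarith
  have hkpos : (0:ℝ) < k := by exact_mod_cast hk1
  have hsm : s ≤ m := by nlinarith
  set d : ℕ := m / (4*k) with hddef
  set F : Finset (X → Y) := Finset.univ.filter
    (fun f : X → Y => k ≤ ((Finset.univ : Finset X).image f).card) with hF
  have hkey : (8:ℝ)⁻¹ ≤ ∑ f ∈ F, selq N f := by
    rcases le_or_gt (2*(k:ℝ)) (∑ u, ((N u).card : ℝ)⁻¹) with hE | hE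
    · exact sel_case1 N hN M hMinj hMN k hk1 hE
    · have h4k : 0 < 4*k := by omega
      have h32 : 32*(k:ℝ)^2 ≤ m := by nlinarith
      have hdk : 8*k ≤ d := by
        rw [hddef, Nat.le_div_iff_mul_le h4k]
        have h5 : ((8*k*(4*k) : ℕ) : ℝ) ≤ (m:ℝ) := by push_cast; nlinarith
        exact_mod_cast h5
      have hd1 : 1 ≤ d := le_trans (by omega : 1 ≤ 8*k) hdk
      have hcard : 2*(k:ℝ)*d + 2*k ≤ Fintype.card X := by
        rw [hcardX]
        have hdle : (d:ℝ) ≤ (m:ℝ)/(4*(k:ℝ)) := by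
          have h6 := Nat.cast_div_le (α := ℝ) (m := m) (n := 4*k)
          rw [hddef]
          push_cast at h6 ⊢
          exact h6
        have h2kd : 2*(k:ℝ)*d ≤ (m:ℝ)/2 := by
          calc 2*(k:ℝ)*d ≤ 2*(k:ℝ)*((m:ℝ)/(4*(k:ℝ))) := by
                refine mul_le_mul_of_nonneg_left hdle (by positivity)
            _ = (m:ℝ)/2 := by field_simp; ring
        have h2k : 2*(k:ℝ) ≤ (m:ℝ)/2 := by nlinarith
        linarith
      obtain ⟨T, hTcard, hTdeg⟩ := exists_highdeg N hN k d hd1 hE hcard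
      exact le_trans (by norm_num) (sel_case2 N hN k d hk1 hd1 T hTcard hTdeg hdk)
  have hsub : (↑F : Set (X → Y)) ⊆
      {f : X → Y | Real.sqrt m / Real.log m ≤ (((univ : Finset X).image f).card : ℝ)} := by
    intro f hf
    rw [Finset.mem_coe, hF, Finset.mem_filter] at hf
    have h7 : (k:ℝ) ≤ (((univ : Finset X).image f).card : ℝ) := by exact_mod_cast hf.2
    exact Set.mem_setOf_eq ▸ le_trans hkr h7
  calc ENNReal.ofReal (8:ℝ)⁻¹ ≤ ENNReal.ofReal (∑ f ∈ F, selq N f) :=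
        ENNReal.ofReal_le_ofReal hkey
    _ = selMeasure N hN ↑F := (selMeasure_finset N hN F).symm
    _ ≤ selMeasure N hN
        {f : X → Y | Real.sqrt m / Real.log m ≤ (((univ : Finset X).image f).card : ℝ)} :=
        measure_mono hsub
end

section
/- Let G = (X, Y, E) be a finite bipartite graph in which every vertex of X has at least one neighbor, and let each u ∈ X independently select one of its neighbors in Y uniformly at random. Let Z ⊆ Y be a nonempty set of vertices each of which has degree weight w(v) ≥ 1. Then with probability at least 1/2, the number of vertices of Z that are selected is at least (1 − 2/e)·|Z|. -/
open MeasureTheory Finset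
open scoped ENNReal

/-- The degree weight of `v ∈ Y`: the sum over neighbors `u` of `v` of `1 / deg u`. -/
noncomputable def degWeight {X Y : Type} [Fintype X] [DecidableEq Y]
    (N : X → Finset Y) (v : Y) : ℝ :=
  ∑ u ∈ univ.filter (fun u => v ∈ N u), 1 / ((N u).card : ℝ)

/-- If `Z ⊆ Y` is a nonempty set of vertices each of degree weight at least `1`, then with
probability at least `1/2` at least `(1 - 2/e) * |Z|` vertices of `Z` are selected. -/
theorem stmt2 (X Y : Type) [Fintype X] [Fintype Y] [DecidableEq Y]
    (N : X → Finset Y) (hN : ∀ u, (N u).Nonempty)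
    (Z : Finset Y) (hZne : Z.Nonempty) (hw : ∀ v ∈ Z, 1 ≤ degWeight N v) :
    (1 / 2 : ℝ≥0∞) ≤
      selMeasure N hN
        {f | (1 - 2 / Real.exp 1) * (Z.card : ℝ) ≤
              ((Z.filter (fun v => ∃ u, f u = v)).card : ℝ)} := by
  classical
  letI : MeasurableSpace Y := ⊤
  set μY : X → Measure Y := fun u => (PMF.uniformOfFinset (N u) (hN u)).toMeasure with hμY
  have hμ : selMeasure N hN = Measure.pi μY := rfl
  haveI : ∀ u, IsProbabilityMeasure (μY u) := fun u => PMF.toMeasure.isProbabilityMeasure _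
  haveI : IsProbabilityMeasure (Measure.pi μY) := inferInstance
  set μ := Measure.pi μY with hμdef
  have epos : (0 : ℝ) < Real.exp 1 := Real.exp_pos 1
  have hZpos : (0 : ℝ) < Z.card := by exact_mod_cast Finset.card_pos.mpr hZne
  -- the "not selected" count
  set g : (X → Y) → ℝ≥0∞ := fun f => ((Z.filter (fun v => ∀ u, f u ≠ v)).card : ℝ≥0∞) with hg
  -- card degree positivity
  have hcard : ∀ u, (1:ℝ) ≤ (N u).card := by
    intro u; exact_mod_cast Finset.card_pos.mpr (hN u)
  -- each "v unselected" event has probability ≤ exp(-1)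
  have key : ∀ v ∈ Z, μ {f | ∀ u, f u ≠ v} ≤ ENNReal.ofReal (Real.exp (-1)) := by
    intro v hv
    have hset : {f : X → Y | ∀ u, f u ≠ v} = Set.pi Set.univ (fun _ => ({v}ᶜ : Set Y)) := by
      ext f; simp [Set.mem_pi]
    rw [hset, Measure.pi_pi]
    set r : X → ℝ := fun u => 1 - (if v ∈ N u then 1 / ((N u).card : ℝ) else 0) with hr
    have hr01 : ∀ u, 0 ≤ r u ∧ r u ≤ 1 := by
      intro u
      constructor
      · simp only [hr, sub_nonneg]
        split
        · rw [div_le_one (lt_of_lt_of_le zero_lt_one (hcard u))]; exact hcard u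
        · exact zero_le_one
      · simp only [hr]
        have : (0:ℝ) ≤ (if v ∈ N u then 1 / ((N u).card : ℝ) else 0) := by positivity
        linarith
    have hfac : ∀ u, μY u ({v}ᶜ : Set Y) = ENNReal.ofReal (r u) := by
      intro u
      have h1 : μY u ({v} : Set Y) = if v ∈ N u then (((N u).card : ℝ≥0∞))⁻¹ else 0 := by
        rw [hμY]
        rw [PMF.toMeasure_apply_singleton _ _ (MeasurableSet.of_discrete)]
        simp [PMF.uniformOfFinset_apply]
      have h2 : μY u ({v}ᶜ : Set Y) = 1 - μY u ({v} : Set Y) :=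
        prob_compl_eq_one_sub (MeasurableSet.of_discrete)
      rw [h2, h1, hr]
      by_cases hvm : v ∈ N u
      · simp only [hvm, if_true]
        have hc : (0:ℝ) < ((N u).card : ℝ) := lt_of_lt_of_le zero_lt_one (hcard u)
        rw [ENNReal.ofReal_sub _ (by positivity), ENNReal.ofReal_one,
          ENNReal.ofReal_div_of_pos hc, ENNReal.ofReal_one, ENNReal.ofReal_natCast, one_div]
      · simp [hvm]
    calc ∏ u, μY u ({v}ᶜ : Set Y) = ENNReal.ofReal (∏ u, r u) := by
          rw [ENNReal.ofReal_prod_of_nonneg (fun u _ => (hr01 u).1)]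
          exact Finset.prod_congr rfl fun u _ => hfac u
      _ ≤ ENNReal.ofReal (Real.exp (-1)) := by
          apply ENNReal.ofReal_le_ofReal
          have step1 : ∏ u, r u = ∏ u ∈ univ.filter (fun u => v ∈ N u),
              (1 - 1 / ((N u).card : ℝ)) := by
            rw [Finset.prod_filter]
            apply Finset.prod_congr rfl
            intro u _
            simp only [hr]
            split <;> simp
          rw [step1]
          have step2 : ∏ u ∈ univ.filter (fun u => v ∈ N u), (1 - 1 / ((N u).card : ℝ))
              ≤ ∏ u ∈ univ.filter (fun u => v ∈ N u), Real.exp (-(1 / ((N u).card : ℝ))) := by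
            apply Finset.prod_le_prod
            · intro u _
              have h := hcard u
              have : 1 / ((N u).card : ℝ) ≤ 1 := by
                rw [div_le_one (lt_of_lt_of_le zero_lt_one h)]; exact h
              linarith
            · intro u _
              have := Real.add_one_le_exp (-(1 / ((N u).card : ℝ)))
              linarith
          refine step2.trans ?_
          rw [← Real.exp_sum]
          apply Real.exp_le_exp.mpr
          have : ∑ u ∈ univ.filter (fun u => v ∈ N u), -(1 / ((N u).card : ℝ))
              = -degWeight N v := by
            rw [degWeight, ← Finset.sum_neg_distrib]
          rw [this]
          linarith [hw v hv]
  -- expectation bound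
  have hgmeas : ∀ (h : (X → Y) → ℝ≥0∞), Measurable h := fun h => Measurable.of_discrete
  have expec : ∫⁻ f, g f ∂μ ≤ (Z.card : ℝ≥0∞) * ENNReal.ofReal (Real.exp (-1)) := by
    have gform : ∀ f, g f = ∑ v ∈ Z, ({f : X → Y | ∀ u, f u ≠ v}).indicator 1 f := by
      intro f
      rw [hg]
      simp only [Finset.card_filter]
      rw [Nat.cast_sum]
      apply Finset.sum_congr rfl
      intro v _
      by_cases h : ∀ u, f u ≠ v <;> simp [Set.indicator, h]
    calc ∫⁻ f, g f ∂μ = ∑ v ∈ Z, μ {f : X → Y | ∀ u, f u ≠ v} := by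
          simp_rw [gform]
          rw [lintegral_finset_sum _ (fun v _ => hgmeas _)]
          exact Finset.sum_congr rfl fun v _ =>
            lintegral_indicator_one (MeasurableSet.of_discrete)
      _ ≤ ∑ _v ∈ Z, ENNReal.ofReal (Real.exp (-1)) := Finset.sum_le_sum key
      _ = (Z.card : ℝ≥0∞) * ENNReal.ofReal (Real.exp (-1)) := by
          rw [Finset.sum_const, nsmul_eq_mul]
  -- Markov
  set a : ℝ≥0∞ := ENNReal.ofReal (2 * Z.card / Real.exp 1) with ha
  have hapos : (0:ℝ) < 2 * Z.card / Real.exp 1 := by positivity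
  have ha0 : a ≠ 0 := by
    rw [ha]; simpa [ENNReal.ofReal_eq_zero, not_le] using hapos
  have hatop : a ≠ ∞ := ENNReal.ofReal_ne_top
  have markov : μ {f | a ≤ g f} ≤ 1 / 2 := by
    calc μ {f | a ≤ g f} ≤ (∫⁻ f, g f ∂μ) / a :=
          meas_ge_le_lintegral_div (hgmeas g).aemeasurable ha0 hatop
      _ ≤ ((Z.card : ℝ≥0∞) * ENNReal.ofReal (Real.exp (-1))) / a :=
          ENNReal.div_le_div_right expec a
      _ = 1 / 2 := by
          rw [ha]
          have h1 : (Z.card : ℝ≥0∞) = ENNReal.ofReal (Z.card : ℝ) :=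
            (ENNReal.ofReal_natCast _).symm
          rw [h1, ← ENNReal.ofReal_mul (by positivity), ← ENNReal.ofReal_div_of_pos hapos]
          have : (Z.card : ℝ) * Real.exp (-1) / (2 * Z.card / Real.exp 1) = 1/2 := by
            rw [Real.exp_neg]
            field_simp
          rw [this]
          rw [ENNReal.ofReal_div_of_pos (by norm_num)]
          norm_num
  -- complement inclusion
  set S : Set (X → Y) := {f | (1 - 2 / Real.exp 1) * (Z.card : ℝ) ≤
      ((Z.filter (fun v => ∃ u, f u = v)).card : ℝ)} with hS
  have hsub : Sᶜ ⊆ {f | a ≤ g f} := by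
    intro f hf
    simp only [hS, Set.mem_compl_iff, Set.mem_setOf_eq, not_le] at hf
    have hsplit : (Z.filter (fun v => ∃ u, f u = v)).card
        + (Z.filter (fun v => ∀ u, f u ≠ v)).card = Z.card := by
      have h := Finset.card_filter_add_card_filter_not (s := Z)
        (p := fun v => ∃ u, f u = v)
      have heq : Z.filter (fun a => ¬ ∃ u, f u = a) = Z.filter (fun v => ∀ u, f u ≠ v) := by
        apply Finset.filter_congr
        intro v _
        exact not_exists
      rw [heq] at h
      exact h
    have hun : 2 * (Z.card : ℝ) / Real.exp 1
        ≤ ((Z.filter (fun v => ∀ u, f u ≠ v)).card : ℝ) := by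
      have : ((Z.filter (fun v => ∀ u, f u ≠ v)).card : ℝ)
          = (Z.card : ℝ) - ((Z.filter (fun v => ∃ u, f u = v)).card : ℝ) := by
        have := hsplit
        push_cast [← this]
        ring
      rw [this]
      have hexp : (1 - 2 / Real.exp 1) * (Z.card : ℝ)
          = (Z.card : ℝ) - 2 * (Z.card : ℝ) / Real.exp 1 := by ring
      rw [hexp] at hf
      linarith
    show a ≤ g f
    rw [ha, hg]
    calc ENNReal.ofReal (2 * Z.card / Real.exp 1)
        ≤ ENNReal.ofReal ((Z.filter (fun v => ∀ u, f u ≠ v)).card : ℝ) :=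
          ENNReal.ofReal_le_ofReal hun
      _ = ((Z.filter (fun v => ∀ u, f u ≠ v)).card : ℝ≥0∞) := ENNReal.ofReal_natCast _
  -- finish
  have hcompl : μ Sᶜ ≤ 1/2 := le_trans (measure_mono hsub) markov
  have hSm : MeasurableSet S := MeasurableSet.of_discrete
  have := prob_compl_eq_one_sub (μ := μ) hSm
  rw [hμ]
  show (1/2 : ℝ≥0∞) ≤ μ S
  have h1 : (1:ℝ≥0∞) - μ S ≤ 1/2 := this ▸ hcompl
  have h2 : (1:ℝ≥0∞) ≤ 1/2 + μ S := by
    rcases le_total (1:ℝ≥0∞) (μ S) with h | h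
    · exact le_add_of_nonneg_of_le zero_le h
    · have h4 := tsub_le_iff_left.mp h1
      rwa [add_comm] at h4
  have h3 : (1:ℝ≥0∞) - 1/2 ≤ μ S := tsub_le_iff_left.mpr h2
  rwa [ENNReal.sub_half ENNReal.one_ne_top] at h3
end

section
/- Let G = (X, Y, E) be a finite bipartite graph with |X| = m ≥ 1 that contains a matching saturating X, and let Z ⊆ Y satisfy |Z| ≤ √m − 1. If each u ∈ X independently selects one of its neighbors in Y uniformly at random, then the expected number of vertices u ∈ X whose selected neighbor lies in Y∖Z is at least (m − |Z|)/√m, and hence at least √m − 1. -/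
open MeasureTheory Finset
open scoped ENNReal

/-- If `|X| = m ≥ 1`, some matching saturates `X`, and `|Z| ≤ √m - 1`, then the expected
number of vertices of `X` whose uniformly random selected neighbor lies outside `Z` is at
least `(m - |Z|)/√m`, hence at least `√m - 1`. -/
theorem stmt5 (X Y : Type) [Fintype X] [Fintype Y] [DecidableEq Y]
    (N : X → Finset Y) (hN : ∀ u, (N u).Nonempty)
    (m : ℕ) (hm : 1 ≤ m) (hcard : Fintype.card X = m)
    (hM : ∃ M : X → Y, Function.Injective M ∧ ∀ u, M u ∈ N u)
    (Z : Finset Y) (hZ : (Z.card : ℝ) ≤ Real.sqrt m - 1) :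
    ENNReal.ofReal (((m : ℝ) - (Z.card : ℝ)) / Real.sqrt m) ≤
      ∫⁻ f, ((univ.filter (fun u => f u ∉ Z)).card : ℝ≥0∞) ∂(selMeasure N hN) ∧
    ENNReal.ofReal (Real.sqrt m - 1) ≤
      ∫⁻ f, ((univ.filter (fun u => f u ∉ Z)).card : ℝ≥0∞) ∂(selMeasure N hN) := by
  classical
  obtain ⟨M, hMinj, hMmem⟩ := hM
  letI : MeasurableSpace Y := ⊤
  set s : ℝ := Real.sqrt m with hsdef
  have hm0 : (0:ℝ) < m := by exact_mod_cast hm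
  have hs0 : 0 < s := Real.sqrt_pos.2 hm0
  have hss : s * s = m := Real.mul_self_sqrt (le_of_lt hm0)
  have hmeasY : ∀ t : Set Y, MeasurableSet t := fun t => trivial
  have hdegpos : ∀ u : X, 0 < ((N u).card : ℝ) := fun u => by
    exact_mod_cast Finset.card_pos.2 (hN u)
  -- the probability that u's selection is outside Z
  set r : X → ℝ := fun u => (((N u).filter (fun v => v ∉ Z)).card : ℝ) / ((N u).card : ℝ)
    with hrdef
  -- Step 1: compute the integral
  have key : ∫⁻ f, ((univ.filter (fun u => f u ∉ Z)).card : ℝ≥0∞) ∂(selMeasure N hN)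
      = ∑ u : X, ENNReal.ofReal (r u) := by
    have h1 : ∀ f : X → Y, ((univ.filter (fun u => f u ∉ Z)).card : ℝ≥0∞)
        = ∑ u : X, Set.indicator {g : X → Y | g u ∉ Z} (1 : (X → Y) → ℝ≥0∞) f := by
      intro f
      rw [Finset.card_filter]
      push_cast
      refine Finset.sum_congr rfl fun u _ => ?_
      simp [Set.indicator_apply]
    have hsets : ∀ u : X, MeasurableSet {g : X → Y | g u ∉ Z} := by
      intro u
      have he : {g : X → Y | g u ∉ Z} = (fun g : X → Y => g u) ⁻¹' {v : Y | v ∉ Z} := rfl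
      rw [he]
      exact (measurable_pi_apply u) (hmeasY {v : Y | v ∉ Z})
    simp only [h1]
    rw [lintegral_finset_sum (f := fun (u : X) (g : X → Y) =>
        Set.indicator {g' : X → Y | g' u ∉ Z} (1 : (X → Y) → ℝ≥0∞) g) univ
      (fun u _ => (measurable_one.indicator (hsets u)))]
    refine Finset.sum_congr rfl fun u _ => ?_
    rw [lintegral_indicator_one (hsets u)]
    have hpre : {g : X → Y | g u ∉ Z} = Function.eval u ⁻¹' {v : Y | v ∉ Z} := rfl
    have : selMeasure N hN {g : X → Y | g u ∉ Z}
        = (PMF.uniformOfFinset (N u) (hN u)).toMeasure {v : Y | v ∉ Z} := by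
      rw [hpre, selMeasure, ← Set.univ_pi_update_univ, Measure.pi_pi]
      rw [Finset.prod_eq_single_of_mem u (Finset.mem_univ u) (fun i _ hi => by
        rw [Function.update_of_ne hi]; simp)]
      simp
    rw [this, PMF.toMeasure_uniformOfFinset_apply (hN u) _ (hmeasY _), hrdef]
    rw [ENNReal.ofReal_div_of_pos (hdegpos u), ENNReal.ofReal_natCast, ENNReal.ofReal_natCast]
    congr 2
    · apply Finset.card_nbij id (fun a ha => by simpa using ha) ?_ ?_
      · intro a _ b _ h; exact h
      · intro b hb; exact ⟨b, by simpa using hb, rfl⟩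
  -- Step 2: real inequality
  have hr_nonneg : ∀ u : X, 0 ≤ r u := fun u => by
    have := hdegpos u; positivity
  set k : ℝ := (Z.card : ℝ) with hkdef
  have hk0 : 0 ≤ k := Nat.cast_nonneg _
  set S : Finset X := univ.filter (fun u : X => ((N u).card : ℝ) ≤ s) with hSdef
  set B : Finset X := univ.filter (fun u : X => ¬ ((N u).card : ℝ) ≤ s) with hBdef
  have hSB : (S.card : ℝ) + B.card = m := by
    have := Finset.card_filter_add_card_filter_not
      (s := (univ : Finset X)) (p := fun u : X => ((N u).card : ℝ) ≤ s)
    rw [Finset.card_univ, hcard] at this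
    exact_mod_cast this
  have hsplit : ∑ u : X, r u = ∑ u ∈ S, r u + ∑ u ∈ B, r u :=
    (Finset.sum_filter_add_sum_filter_not _ _ _).symm
  -- lower bound for vertices in N u minus Z
  have hsub : ∀ u : X, ((N u).card : ℝ) - k ≤ (((N u).filter (fun v => v ∉ Z)).card : ℝ) := by
    intro u
    have h1 : (N u).filter (fun v => v ∉ Z) = N u \ Z := (Finset.sdiff_eq_filter _ _).symm
    have h2 : (N u).card ≤ (N u \ Z).card + Z.card := Finset.card_le_card_sdiff_add_card
    rw [h1]
    have h3 : ((N u).card : ℝ) ≤ ((N u \ Z).card : ℝ) + ((Z.card : ℕ) : ℝ) := by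
      exact_mod_cast h2
    have hkk : k = ((Z.card : ℕ) : ℝ) := hkdef
    linarith
  -- bound for big-degree vertices
  have hB : ∀ u ∈ B, (s - k)/s ≤ r u := by
    intro u hu
    have hd : s < ((N u).card : ℝ) := by
      have := Finset.mem_filter.1 hu
      linarith [not_le.1 this.2]
    have hd0 := hdegpos u
    have h1 : (s - k)/s ≤ (((N u).card : ℝ) - k)/((N u).card : ℝ) := by
      rw [div_le_div_iff₀ hs0 hd0]
      nlinarith
    have h2 : (((N u).card : ℝ) - k)/((N u).card : ℝ) ≤ r u :=
      (div_le_div_iff_of_pos_right hd0).2 (hsub u)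
    linarith
  -- bound for small-degree vertices via the matching
  have hSsum : ((S.card : ℝ) - k)/s ≤ ∑ u ∈ S, r u := by
    have hpt : ∀ u ∈ S, (if M u ∉ Z then 1/s else 0) ≤ r u := by
      intro u hu
      by_cases hMu : M u ∉ Z
      · rw [if_pos hMu]
        have hd : ((N u).card : ℝ) ≤ s := (Finset.mem_filter.1 hu).2
        have hd0 := hdegpos u
        have h1 : (1:ℝ) ≤ (((N u).filter (fun v => v ∉ Z)).card : ℝ) := by
          have : M u ∈ (N u).filter (fun v => v ∉ Z) :=
            Finset.mem_filter.2 ⟨hMmem u, hMu⟩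
          exact_mod_cast Finset.card_pos.2 ⟨M u, this⟩
        have h2 : 1/s ≤ 1/((N u).card : ℝ) := one_div_le_one_div_of_le hd0 hd
        have h3 : 1/((N u).card : ℝ) ≤ r u := (div_le_div_iff_of_pos_right hd0).2 h1
        linarith
      · rw [if_neg hMu]
        exact hr_nonneg u
    have h4 : ∑ u ∈ S, (if M u ∉ Z then 1/s else 0) ≤ ∑ u ∈ S, r u :=
      Finset.sum_le_sum hpt
    have h5 : ∑ u ∈ S, (if M u ∉ Z then 1/s else 0)
        = ((S.filter (fun u => M u ∉ Z)).card : ℝ) * (1/s) := by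
      rw [← Finset.sum_filter]
      simp [mul_comm]
    have h6 : (S.card : ℝ) ≤ ((S.filter (fun u => M u ∉ Z)).card : ℝ) + k := by
      have hc1 : S.card = (S.filter (fun u => M u ∉ Z)).card
          + (S.filter (fun u => ¬ (M u ∉ Z))).card :=
        (Finset.card_filter_add_card_filter_not _).symm
      have hc2 : (S.filter (fun u => ¬ (M u ∉ Z))).card ≤ Z.card := by
        apply Finset.card_le_card_of_injOn M
        · intro u hu
          have := (Finset.mem_filter.1 hu).2
          simpa using this
        · exact fun a _ b _ h => hMinj h
      have : (S.card : ℝ) = ((S.filter (fun u => M u ∉ Z)).card : ℝ)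
          + ((S.filter (fun u => ¬ (M u ∉ Z))).card : ℝ) := by exact_mod_cast hc1
      have hkk : k = ((Z.card : ℕ) : ℝ) := hkdef
      have hc2'' : ((S.filter (fun u => ¬ (M u ∉ Z))).card : ℝ) ≤ ((Z.card : ℕ) : ℝ) := by
        exact_mod_cast hc2
      linarith
    have h7 : ((S.card : ℝ) - k)/s ≤ ((S.filter (fun u => M u ∉ Z)).card : ℝ) * (1/s) := by
      rw [mul_one_div, div_le_div_iff₀ hs0 hs0]
      nlinarith
    linarith
  have hBsum : (B.card : ℝ) * ((s - k)/s) ≤ ∑ u ∈ B, r u := by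
    have := Finset.card_nsmul_le_sum B r ((s-k)/s) hB
    simpa [nsmul_eq_mul] using this
  have main : ((m : ℝ) - k)/s ≤ ∑ u : X, r u := by
    have hks : k ≤ s - 1 := hZ
    have hBpos : (0:ℝ) ≤ (B.card : ℝ) := Nat.cast_nonneg _
    have hcomb : ((m : ℝ) - k)/s ≤ ((S.card : ℝ) - k)/s + (B.card : ℝ) * ((s - k)/s) := by
      rw [← mul_div_assoc, ← add_div, div_le_div_iff₀ hs0 hs0]
      nlinarith [mul_nonneg hBpos (show (0:ℝ) ≤ s - k - 1 by linarith)]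
    linarith [hsplit]
  -- Step 3: conclude
  have hint : ENNReal.ofReal (((m : ℝ) - k)/s)
      ≤ ∫⁻ f, ((univ.filter (fun u => f u ∉ Z)).card : ℝ≥0∞) ∂(selMeasure N hN) := by
    rw [key, ← ENNReal.ofReal_sum_of_nonneg (fun u _ => hr_nonneg u)]
    exact ENNReal.ofReal_le_ofReal main
  refine ⟨hint, le_trans (ENNReal.ofReal_le_ofReal ?_) hint⟩
  rw [le_div_iff₀ hs0]
  nlinarith
end

section
/- Let G = (X, Y, E) be a finite bipartite graph with |X| = m ≥ 2 in which every vertex of X has at least one neighbor, and let each u ∈ X independently select one of its neighbors in Y uniformly at random. Let W ⊆ Y be a set of vertices each having degree weight w(v) ≤ 1, and let t = 8 + ⌈2·log₂ m⌉. Then the probability that some vertex of W is selected by at least t vertices of X is at most |W| / (256·m²). -/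
open MeasureTheory Finset

open scoped ENNReal

lemma aux_esymm_step {α : Type} [DecidableEq α] (s : Finset α) (p : α → ℝ≥0∞) (k : ℕ) :
    ((k : ℝ≥0∞) + 1) * ∑ T ∈ s.powersetCard (k + 1), ∏ u ∈ T, p u ≤
      (∑ u ∈ s, p u) * ∑ S ∈ s.powersetCard k, ∏ u ∈ S, p u := by
  have h1 : ((k : ℝ≥0∞) + 1) * ∑ T ∈ s.powersetCard (k + 1), ∏ u ∈ T, p u
      = ∑ T ∈ s.powersetCard (k + 1), ∑ a ∈ T, p a * ∏ u ∈ T.erase a, p u := by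
    rw [Finset.mul_sum]
    refine Finset.sum_congr rfl fun T hT => ?_
    rw [Finset.mem_powersetCard] at hT
    calc ((k : ℝ≥0∞) + 1) * ∏ u ∈ T, p u = ∑ _a ∈ T, ∏ u ∈ T, p u := by
          rw [Finset.sum_const, hT.2, nsmul_eq_mul]; push_cast; ring
      _ = ∑ a ∈ T, p a * ∏ u ∈ T.erase a, p u :=
          Finset.sum_congr rfl fun a ha => (Finset.mul_prod_erase T p ha).symm
  have h2 : ∑ T ∈ s.powersetCard (k + 1), ∑ a ∈ T, p a * ∏ u ∈ T.erase a, p u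
      = ∑ S ∈ s.powersetCard k, ∑ a ∈ s \ S, p a * ∏ u ∈ S, p u := by
    rw [Finset.sum_sigma', Finset.sum_sigma']
    refine Finset.sum_nbij' (fun x => ⟨x.1.erase x.2, x.2⟩)
      (fun x => ⟨insert x.2 x.1, x.2⟩) ?_ ?_ ?_ ?_ ?_
    · rintro ⟨T, a⟩ h
      simp only [Finset.mem_sigma, Finset.mem_powersetCard] at h ⊢
      obtain ⟨⟨hTs, hTc⟩, ha⟩ := h
      refine ⟨⟨(Finset.erase_subset _ _).trans hTs, ?_⟩,
        Finset.mem_sdiff.2 ⟨hTs ha, Finset.notMem_erase _ _⟩⟩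
      rw [Finset.card_erase_of_mem ha, hTc]; omega
    · rintro ⟨S, a⟩ h
      simp only [Finset.mem_sigma, Finset.mem_powersetCard, Finset.mem_sdiff] at h ⊢
      obtain ⟨⟨hSs, hSc⟩, has, haS⟩ := h
      exact ⟨⟨Finset.insert_subset has hSs,
        by rw [Finset.card_insert_of_notMem haS, hSc]⟩, Finset.mem_insert_self _ _⟩
    · rintro ⟨T, a⟩ h
      simp only [Finset.mem_sigma] at h
      simp [Finset.insert_erase h.2]
    · rintro ⟨S, a⟩ h
      simp only [Finset.mem_sigma, Finset.mem_sdiff] at h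
      simp [Finset.erase_insert h.2.2]
    · rintro ⟨T, a⟩ h; rfl
  rw [h1, h2, Finset.mul_sum]
  refine Finset.sum_le_sum fun S hS => ?_
  rw [← Finset.sum_mul]
  exact mul_le_mul_left (Finset.sum_le_sum_of_subset (Finset.sdiff_subset)) _

lemma aux_esymm_le {α : Type} [DecidableEq α] (s : Finset α) (p : α → ℝ≥0∞) (k : ℕ) :
    (k.factorial : ℝ≥0∞) * ∑ T ∈ s.powersetCard k, ∏ u ∈ T, p u ≤ (∑ u ∈ s, p u) ^ k := by
  induction k with
  | zero => simp
  | succ k ih =>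
    calc ((k + 1).factorial : ℝ≥0∞) * ∑ T ∈ s.powersetCard (k + 1), ∏ u ∈ T, p u
        = (k.factorial : ℝ≥0∞) *
            (((k : ℝ≥0∞) + 1) * ∑ T ∈ s.powersetCard (k + 1), ∏ u ∈ T, p u) := by
          rw [Nat.factorial_succ]; push_cast; ring
      _ ≤ (k.factorial : ℝ≥0∞) *
            ((∑ u ∈ s, p u) * ∑ S ∈ s.powersetCard k, ∏ u ∈ S, p u) :=
          mul_le_mul_right (aux_esymm_step s p k) _
      _ = (∑ u ∈ s, p u) *
            ((k.factorial : ℝ≥0∞) * ∑ S ∈ s.powersetCard k, ∏ u ∈ S, p u) := by ring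
      _ ≤ (∑ u ∈ s, p u) * (∑ u ∈ s, p u) ^ k := mul_le_mul_right ih _
      _ = (∑ u ∈ s, p u) ^ (k + 1) := (pow_succ' _ _).symm

lemma aux_two_pow_le_factorial : ∀ n : ℕ, 4 ≤ n → 2 ^ n ≤ n.factorial := by
  intro n hn
  induction n with
  | zero => omega
  | succ k ih =>
    rcases Nat.lt_or_ge k 4 with hk | hk
    · interval_cases k
      · omega
      · omega
      · omega
      · decide
    · have h1 := ih (by omega)
      have : 2 ^ (k + 1) = 2 * 2 ^ k := by ring
      rw [this, Nat.factorial_succ]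
      have : 2 * 2 ^ k ≤ 2 * k.factorial := by omega
      refine this.trans (Nat.mul_le_mul_right _ (by omega))

/-- If `|X| = m ≥ 2`, `W ⊆ Y` consists of vertices of degree weight at most `1`, and
`t = 8 + ⌈2·log₂ m⌉`, then the probability that some vertex of `W` is selected by at
least `t` vertices of `X` is at most `|W| / (256·m²)`. -/
theorem stmt8 (X Y : Type) [Fintype X] [Fintype Y] [DecidableEq Y]
    (N : X → Finset Y) (hN : ∀ u, (N u).Nonempty)
    (m : ℕ) (hm : 2 ≤ m) (hcard : Fintype.card X = m)
    (W : Finset Y) (hw : ∀ v ∈ W, degWeight N v ≤ 1)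
    (t : ℕ) (ht : t = 8 + ⌈2 * Real.logb 2 m⌉₊) :
    selMeasure N hN
        {f | ∃ v ∈ W, t ≤ (univ.filter (fun u => f u = v)).card} ≤
      ENNReal.ofReal ((W.card : ℝ) / (256 * (m : ℝ) ^ 2)) := by
  classical
  letI : MeasurableSpace Y := ⊤
  set ν : X → Measure Y := fun u => (PMF.uniformOfFinset (N u) (hN u)).toMeasure with hν
  haveI : ∀ u, IsProbabilityMeasure (ν u) := fun u => PMF.toMeasure.isProbabilityMeasure _
  haveI : ∀ u, SigmaFinite (ν u) := fun u => inferInstance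
  set μ := selMeasure N hN with hμ
  have hμpi : μ = Measure.pi ν := rfl
  -- singleton measure
  have hsing : ∀ (u : X) (v : Y),
      ν u {v} = if v ∈ N u then ((N u).card : ℝ≥0∞)⁻¹ else 0 := by
    intro u v
    rw [hν]
    rw [PMF.toMeasure_apply_singleton _ _ MeasurableSpace.measurableSet_top]
    simp [PMF.uniformOfFinset_apply]
  -- key real inequality : 256 * m^2 ≤ 2 ^ t
  have hmpos : (0 : ℝ) < (m : ℝ) := by positivity
  have hreal : 256 * (m : ℝ) ^ 2 ≤ (2 : ℝ) ^ t := by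
    have hle : 2 * Real.logb 2 m ≤ (⌈2 * Real.logb 2 m⌉₊ : ℝ) := Nat.le_ceil _
    have h1 : (m : ℝ) ^ 2 ≤ (2 : ℝ) ^ (⌈2 * Real.logb 2 m⌉₊ : ℕ) := by
      have h2 : (m : ℝ) ^ 2 = (2 : ℝ) ^ (2 * Real.logb 2 m : ℝ) := by
        rw [mul_comm (2 : ℝ) (Real.logb 2 m), Real.rpow_mul (by norm_num),
          Real.rpow_logb (by norm_num) (by norm_num) hmpos, Real.rpow_two]
      rw [h2, ← Real.rpow_natCast (2 : ℝ) _]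
      exact Real.rpow_le_rpow_of_exponent_le (by norm_num) hle
    calc 256 * (m : ℝ) ^ 2 ≤ 256 * (2 : ℝ) ^ (⌈2 * Real.logb 2 m⌉₊ : ℕ) := by
          nlinarith [h1]
      _ = (2 : ℝ) ^ t := by rw [ht, pow_add]; norm_num
  have ht4 : 4 ≤ t := by omega
  -- union bound over W
  have hE : {f : X → Y | ∃ v ∈ W, t ≤ (univ.filter (fun u => f u = v)).card}
      = ⋃ v ∈ W, {f : X → Y | t ≤ (univ.filter (fun u => f u = v)).card} := by
    ext f; simp
  rw [hE]
  refine le_trans (measure_biUnion_finset_le W _) ?_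
  -- per-vertex bound
  have hv_bound : ∀ v ∈ W,
      μ {f : X → Y | t ≤ (univ.filter (fun u => f u = v)).card} ≤
        ENNReal.ofReal (1 / (256 * (m : ℝ) ^ 2)) := by
    intro v hv
    -- union over t-subsets
    have hsub : {f : X → Y | t ≤ (univ.filter (fun u => f u = v)).card}
        ⊆ ⋃ S ∈ (univ : Finset X).powersetCard t, {f : X → Y | ∀ u ∈ S, f u = v} := by
      intro f hf
      obtain ⟨S, hS, hcardS⟩ := Finset.exists_subset_card_eq hf
      refine Set.mem_iUnion₂.2 ⟨S, Finset.mem_powersetCard.2 ⟨Finset.subset_univ S, hcardS⟩,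
        fun u hu => (Finset.mem_filter.1 (hS hu)).2⟩
    have hAS : ∀ S : Finset X,
        μ {f : X → Y | ∀ u ∈ S, f u = v} = ∏ u ∈ S, ν u {v} := by
      intro S
      have hset : {f : X → Y | ∀ u ∈ S, f u = v}
          = Set.pi Set.univ (fun u => if u ∈ S then ({v} : Set Y) else Set.univ) := by
        ext f
        simp only [Set.mem_pi, Set.mem_univ, forall_true_left, Set.mem_setOf_eq]
        constructor
        · intro h u
          by_cases hu : u ∈ S <;> simp [hu, h]
        · intro h u hu
          have := h u; simp [hu] at this; exact this
      rw [hμpi, hset, Measure.pi_pi]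
      have : ∀ u : X, ν u (if u ∈ S then ({v} : Set Y) else Set.univ)
          = if u ∈ S then ν u {v} else 1 := by
        intro u; by_cases hu : u ∈ S <;> simp [hu]
      rw [Finset.prod_congr rfl fun u _ => this u]
      exact Fintype.prod_ite_mem S fun u => ν u {v}
    have hsum1 : ∑ u : X, ν u {v} ≤ 1 := by
      have hstep : ∑ u : X, ν u {v}
          = ∑ u ∈ univ.filter (fun u => v ∈ N u), ((N u).card : ℝ≥0∞)⁻¹ := by
        rw [Finset.sum_filter]
        exact Finset.sum_congr rfl fun u _ => by rw [hsing]
      rw [hstep]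
      have hofr : ∑ u ∈ univ.filter (fun u => v ∈ N u), ((N u).card : ℝ≥0∞)⁻¹
          = ENNReal.ofReal (degWeight N v) := by
        rw [degWeight, ENNReal.ofReal_sum_of_nonneg (fun u _ => by positivity)]
        refine Finset.sum_congr rfl fun u _ => ?_
        have hc : (0 : ℝ) < ((N u).card : ℝ) := by exact_mod_cast (hN u).card_pos
        rw [one_div, ENNReal.ofReal_inv_of_pos hc, ENNReal.ofReal_natCast]
      rw [hofr]
      calc ENNReal.ofReal (degWeight N v) ≤ ENNReal.ofReal 1 :=
            ENNReal.ofReal_le_ofReal (hw v hv)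
        _ = 1 := ENNReal.ofReal_one
    calc μ {f : X → Y | t ≤ (univ.filter (fun u => f u = v)).card}
        ≤ μ (⋃ S ∈ (univ : Finset X).powersetCard t, {f : X → Y | ∀ u ∈ S, f u = v}) :=
          measure_mono hsub
      _ ≤ ∑ S ∈ (univ : Finset X).powersetCard t, μ {f : X → Y | ∀ u ∈ S, f u = v} :=
          measure_biUnion_finset_le _ _
      _ = ∑ S ∈ (univ : Finset X).powersetCard t, ∏ u ∈ S, ν u {v} :=
          Finset.sum_congr rfl fun S _ => hAS S
      _ ≤ ((t.factorial : ℝ≥0∞))⁻¹ := by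
          rw [ENNReal.le_inv_iff_mul_le, mul_comm]
          calc (t.factorial : ℝ≥0∞) * ∑ S ∈ (univ : Finset X).powersetCard t, ∏ u ∈ S, ν u {v}
              ≤ (∑ u : X, ν u {v}) ^ t := aux_esymm_le _ _ t
            _ ≤ 1 ^ t := pow_le_pow_left' hsum1 t
            _ = 1 := one_pow t
      _ ≤ ((2 : ℝ≥0∞) ^ t)⁻¹ := by
          refine ENNReal.inv_le_inv' ?_
          have h2 : ((2 : ℕ) ^ t : ℝ≥0∞) ≤ (t.factorial : ℝ≥0∞) := by
            exact_mod_cast Nat.cast_le.2 (aux_two_pow_le_factorial t ht4)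
          calc (2 : ℝ≥0∞) ^ t = ((2 : ℕ) ^ t : ℝ≥0∞) := by push_cast; ring
            _ ≤ (t.factorial : ℝ≥0∞) := h2
      _ ≤ ENNReal.ofReal (1 / (256 * (m : ℝ) ^ 2)) := by
          have hpos : (0 : ℝ) < 256 * (m : ℝ) ^ 2 := by positivity
          have h2t : (0 : ℝ) < (2 : ℝ) ^ t := by positivity
          have heq : ((2 : ℝ≥0∞) ^ t)⁻¹ = ENNReal.ofReal (1 / (2 : ℝ) ^ t) := by
            rw [one_div, ENNReal.ofReal_inv_of_pos h2t]
            congr 1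
            rw [ENNReal.ofReal_pow (by norm_num : (0:ℝ) ≤ 2)]
            norm_num
          rw [heq]
          exact ENNReal.ofReal_le_ofReal (by
            rw [div_le_div_iff₀ h2t hpos]
            nlinarith [hreal])
  calc ∑ v ∈ W, μ {f : X → Y | t ≤ (univ.filter (fun u => f u = v)).card}
      ≤ ∑ _v ∈ W, ENNReal.ofReal (1 / (256 * (m : ℝ) ^ 2)) :=
        Finset.sum_le_sum hv_bound
    _ = ENNReal.ofReal ((W.card : ℝ) / (256 * (m : ℝ) ^ 2)) := by
        rw [Finset.sum_const, nsmul_eq_mul, ← ENNReal.ofReal_natCast,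
          ← ENNReal.ofReal_mul (by positivity), mul_one_div]
end
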